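/- For vectors x, y ∈ ℝⁿ, x majorizes y if and only if y can be written as a convex combination of x and permutations of x (equivalently, y = Dx for some doubly stochastic matrix D). -/

import Mathlib

open Finset

/-- The `i`-th largest entry (0-indexed) of the tuple `x`. -/
noncomputable def sortedDesc (n : ℕ) (x : Fin n → ℝ) : Fin n → ℝ :=
  fun i => x (Tuple.sort x i.rev)

/-- Sum of the `k` largest entries of `x`. -/
noncomputable def topSum (n : ℕ) (x : Fin n → ℝ) (k : ℕ) : ℝ :=
  ∑ i ∈ Finset.univ.filter (fun i : Fin n => (i : ℕ) < k), sortedDesc n x i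

/-- `u` majorizes `x`. -/
def Majorizes (n : ℕ) (u x : Fin n → ℝ) : Prop :=
  (∀ k, k < n → topSum n x k ≤ topSum n u k) ∧ (∑ i, x i = ∑ i, u i)

/-- `u` weakly submajorizes `x`. -/
def WeakSubmajorizes (n : ℕ) (u x : Fin n → ℝ) : Prop :=
  ∀ k, k ≤ n → topSum n x k ≤ topSum n u k

/-- Number of nonzero components. -/
noncomputable def suppCard (n : ℕ) (x : Fin n → ℝ) : ℕ :=
  (Finset.univ.filter (fun i => x i ≠ 0)).card


lemma strictMono_fin_le_aux {k n : ℕ} {g : Fin k → Fin n} (hg : StrictMono g) :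
    ∀ m (hm : m < k), m ≤ (g ⟨m, hm⟩ : ℕ) := by
  intro m
  induction m with
  | zero => intro _; exact Nat.zero_le _
  | succ m ih =>
    intro hm
    have hm' := Nat.lt_of_succ_lt hm
    have h1 : (g ⟨m, hm'⟩ : ℕ) < (g ⟨m + 1, hm⟩ : ℕ) := hg (by simp [Fin.lt_def])
    exact Nat.succ_le_of_lt (lt_of_le_of_lt (ih hm') h1)

lemma strictMono_fin_le {k n : ℕ} {g : Fin k → Fin n} (hg : StrictMono g) (i : Fin k) :
    (i : ℕ) ≤ (g i : ℕ) := by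
  simpa using strictMono_fin_le_aux hg i.1 i.2

lemma sortedDesc_anti (n : ℕ) (x : Fin n → ℝ) : Antitone (sortedDesc n x) := by
  intro i j hij
  exact Tuple.monotone_sort x (Fin.rev_le_rev.2 hij)

lemma filter_lt_eq_map (n k : ℕ) (hk : k ≤ n) :
    Finset.univ.filter (fun i : Fin n => (i : ℕ) < k)
      = Finset.map (Fin.castLEEmb hk) Finset.univ := by
  ext i
  simp only [mem_filter, mem_univ, true_and, mem_map, Fin.castLEEmb_apply]
  constructor
  · intro h; exact ⟨⟨i, h⟩, rfl⟩
  · rintro ⟨j, rfl⟩; exact j.2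

lemma card_filter_lt (n k : ℕ) (hk : k ≤ n) :
    (Finset.univ.filter (fun i : Fin n => (i : ℕ) < k)).card = k := by
  rw [filter_lt_eq_map n k hk]; simp

lemma sum_subset_le_antitone {n : ℕ} {f : Fin n → ℝ} (hf : Antitone f) (T : Finset (Fin n)) :
    ∑ j ∈ T, f j ≤ ∑ j ∈ Finset.univ.filter (fun i : Fin n => (i : ℕ) < T.card), f j := by
  have hk : T.card ≤ n := by simpa using T.card_le_univ
  rw [filter_lt_eq_map n T.card hk, Finset.sum_map]
  let e := T.orderIsoOfFin rfl
  have h1 : ∑ j ∈ T, f j = ∑ i : Fin T.card, f (e i) := by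
    rw [← Finset.sum_coe_sort T f]
    exact Fintype.sum_equiv e.toEquiv _ _ (fun i => rfl) |>.symm
  rw [h1]
  refine Finset.sum_le_sum fun i _ => hf ?_
  rw [Fin.le_def]
  exact (strictMono_fin_le (fun a b hab => Subtype.coe_lt_coe.2 (e.strictMono hab)) i).trans_eq'
    (by simp [Fin.castLEEmb])

lemma topSum_zero (n : ℕ) (x : Fin n → ℝ) : topSum n x 0 = 0 := by
  simp [topSum]

lemma topSum_succ (n : ℕ) (x : Fin n → ℝ) (k : ℕ) (hk : k < n) :
    topSum n x (k + 1) = topSum n x k + sortedDesc n x ⟨k, hk⟩ := by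
  unfold topSum
  rw [show Finset.univ.filter (fun i : Fin n => (i : ℕ) < k + 1)
      = insert (⟨k, hk⟩ : Fin n) (Finset.univ.filter (fun i : Fin n => (i : ℕ) < k)) by
    ext i; simp only [mem_filter, mem_univ, true_and, mem_insert, Fin.ext_iff]; omega]
  rw [Finset.sum_insert (by simp)]
  ring

lemma topSum_total (n : ℕ) (x : Fin n → ℝ) : topSum n x n = ∑ i, x i := by
  unfold topSum
  rw [show Finset.univ.filter (fun i : Fin n => (i : ℕ) < n) = Finset.univ by
    ext i; simpa using i.2]
  exact Equiv.sum_comp (Tuple.sort x * (Fin.revPerm : Equiv.Perm (Fin n))) x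

lemma sortedDesc_apply (n : ℕ) (x : Fin n → ℝ) (i : Fin n) :
    sortedDesc n x i = x ((Tuple.sort x * (Fin.revPerm : Equiv.Perm (Fin n))) i) := rfl

lemma sum_le_topSum (n : ℕ) (x : Fin n → ℝ) (S : Finset (Fin n)) :
    ∑ i ∈ S, x i ≤ topSum n x S.card := by
  set π : Equiv.Perm (Fin n) := Tuple.sort x * (Fin.revPerm : Equiv.Perm (Fin n)) with hπ
  have h1 : ∑ i ∈ S, x i = ∑ j ∈ S.image π.symm, sortedDesc n x j := by
    rw [Finset.sum_image (fun a _ b _ h => π.symm.injective h)]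
    exact Finset.sum_congr rfl fun i _ => by simp [sortedDesc_apply, ← hπ]
  have h2 : (S.image π.symm).card = S.card := Finset.card_image_of_injective _ π.symm.injective
  rw [h1]
  calc ∑ j ∈ S.image π.symm, sortedDesc n x j
      ≤ ∑ j ∈ Finset.univ.filter (fun i : Fin n => (i : ℕ) < (S.image π.symm).card),
          sortedDesc n x j := sum_subset_le_antitone (sortedDesc_anti n x) _
    _ = topSum n x S.card := by rw [h2]; rfl

lemma topSum_eq_sum (n : ℕ) (x : Fin n → ℝ) (k : ℕ) (hk : k ≤ n) :
    ∃ S : Finset (Fin n), S.card = k ∧ topSum n x k = ∑ i ∈ S, x i := by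
  set π : Equiv.Perm (Fin n) := Tuple.sort x * (Fin.revPerm : Equiv.Perm (Fin n)) with hπ
  refine ⟨(Finset.univ.filter (fun i : Fin n => (i : ℕ) < k)).image π, ?_, ?_⟩
  · rw [Finset.card_image_of_injective _ π.injective, card_filter_lt n k hk]
  · rw [Finset.sum_image (fun a _ b _ h => π.injective h)]
    rfl

lemma majorizes_perm (n : ℕ) (x : Fin n → ℝ) (σ : Equiv.Perm (Fin n)) :
    Majorizes n x (x ∘ σ) := by
  constructor
  · intro k hk
    obtain ⟨S, hS, hSsum⟩ := topSum_eq_sum n (x ∘ σ) k hk.le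
    rw [hSsum]
    have h1 : ∑ i ∈ S, (x ∘ σ) i = ∑ j ∈ S.image σ, x j := by
      rw [Finset.sum_image (fun a _ b _ h => σ.injective h)]; rfl
    rw [h1]
    have h2 := sum_le_topSum n x (S.image σ)
    rwa [Finset.card_image_of_injective _ σ.injective, hS] at h2
  · exact Equiv.sum_comp σ x

lemma majorizes_convex (n : ℕ) (x : Fin n → ℝ) : Convex ℝ {y | Majorizes n x y} := by
  rintro y hy z hz a b ha hb hab
  constructor
  · intro k hk
    obtain ⟨S, hS, hSsum⟩ := topSum_eq_sum n (a • y + b • z) k hk.le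
    rw [hSsum]
    have h1 : ∑ i ∈ S, (a • y + b • z) i = a * ∑ i ∈ S, y i + b * ∑ i ∈ S, z i := by
      simp [Finset.mul_sum, Finset.sum_add_distrib]
    rw [h1]
    have h2 : ∑ i ∈ S, y i ≤ topSum n x k := hS ▸ (sum_le_topSum n y S).trans (hS ▸ hy.1 k hk)
    have h3 : ∑ i ∈ S, z i ≤ topSum n x k := hS ▸ (sum_le_topSum n z S).trans (hS ▸ hz.1 k hk)
    have h4 : a * topSum n x k + b * topSum n x k = topSum n x k := by
      rw [← add_mul, hab, one_mul]
    linarith [mul_le_mul_of_nonneg_left h2 ha, mul_le_mul_of_nonneg_left h3 hb]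
  · have h1 : ∑ i, (a • y + b • z) i = a * ∑ i, y i + b * ∑ i, z i := by
      simp [Finset.mul_sum, Finset.sum_add_distrib]
    rw [h1, hy.2, hz.2]
    linear_combination (∑ i : Fin n, x i) * hab

lemma hull_subset_majorizes (n : ℕ) (x y : Fin n → ℝ)
    (h : y ∈ convexHull ℝ {z : Fin n → ℝ | ∃ σ : Equiv.Perm (Fin n), z = x ∘ σ}) :
    Majorizes n x y := by
  refine convexHull_min ?_ (majorizes_convex n x) h
  rintro z ⟨σ, rfl⟩
  exact majorizes_perm n x σ

lemma rearrange_le (n : ℕ) (c y : Fin n → ℝ) :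
    ∑ i, c i * y i ≤ ∑ i, sortedDesc n c i * sortedDesc n y i := by
  set πc : Equiv.Perm (Fin n) := Tuple.sort c * (Fin.revPerm : Equiv.Perm (Fin n)) with hπc
  set πy : Equiv.Perm (Fin n) := Tuple.sort y * (Fin.revPerm : Equiv.Perm (Fin n)) with hπy
  have hmono : Monovary (sortedDesc n c) (sortedDesc n y) :=
    (sortedDesc_anti n c).monovary (sortedDesc_anti n y)
  have h1 : ∑ i, c i * y i = ∑ i, sortedDesc n c ((πc⁻¹ * πy) i) * sortedDesc n y i := by
    rw [← Equiv.sum_comp πy (fun j => c j * y j)]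
    refine Finset.sum_congr rfl fun i _ => ?_
    simp [sortedDesc_apply, ← hπc, ← hπy, Equiv.Perm.mul_apply]
  rw [h1]
  exact hmono.sum_comp_perm_mul_le_sum_mul

lemma abel_aux (a D : ℕ → ℝ) (n : ℕ) (ha : ∀ i, i + 1 < n → a (i + 1) ≤ a i)
    (hD : ∀ k, k ≤ n → 0 ≤ D k) (h0 : D 0 = 0) :
    ∀ m, 1 ≤ m → m ≤ n → a (m - 1) * D m ≤ ∑ i ∈ Finset.range m, a i * (D (i + 1) - D i) := by
  intro m hm
  induction m, hm using Nat.le_induction with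
  | base => intro _; simp [h0]
  | succ m hm ih =>
    intro hn
    have hmn : m ≤ n := le_trans (Nat.le_succ m) hn
    have h1 := ih hmn
    rw [Finset.sum_range_succ]
    have h2 : a m ≤ a (m - 1) := by
      have := ha (m - 1) (by omega)
      rwa [Nat.sub_add_cancel hm] at this
    have h3 : 0 ≤ D m := hD m hmn
    simp only [Nat.add_sub_cancel]
    nlinarith [mul_le_mul_of_nonneg_right h2 h3]

lemma sorted_sum_le (n : ℕ) (x y : Fin n → ℝ) (h : Majorizes n x y) (a : Fin n → ℝ)
    (ha : Antitone a) :
    ∑ i, a i * sortedDesc n y i ≤ ∑ i, a i * sortedDesc n x i := by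
  rcases Nat.eq_zero_or_pos n with rfl | hn
  · simp
  set a' : ℕ → ℝ := fun i => if h : i < n then a ⟨i, h⟩ else 0 with ha'
  set D : ℕ → ℝ := fun k => topSum n x k - topSum n y k with hDdef
  have key : ∀ w : Fin n → ℝ, ∑ i, a i * sortedDesc n w i
      = ∑ i ∈ Finset.range n, a' i * (topSum n w (i + 1) - topSum n w i) := by
    intro w
    rw [← Fin.sum_univ_eq_sum_range (fun i => a' i * (topSum n w (i + 1) - topSum n w i)) n]
    refine Finset.sum_congr rfl fun i _ => ?_
    have h1 : a' (i : ℕ) = a i := by simp [ha', i.2]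
    have h2 : topSum n w ((i : ℕ) + 1) - topSum n w (i : ℕ) = sortedDesc n w i := by
      rw [topSum_succ n w i i.2]; simp
    rw [h1, h2]
  have hDn : D n = 0 := by simp [hDdef, topSum_total, h.2]
  have habel := abel_aux a' D n ?_ ?_ ?_ n hn le_rfl
  · have hsplit : ∑ i ∈ Finset.range n, a' i * (D (i + 1) - D i)
        = ∑ i ∈ Finset.range n, a' i * (topSum n x (i + 1) - topSum n x i)
          - ∑ i ∈ Finset.range n, a' i * (topSum n y (i + 1) - topSum n y i) := by
      rw [← Finset.sum_sub_distrib]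
      refine Finset.sum_congr rfl fun i _ => ?_
      simp only [hDdef]; ring
    have hzero : a' (n - 1) * D n = 0 := by rw [hDn, mul_zero]
    rw [key y, key x]
    rw [hsplit, hzero] at habel
    linarith
  · intro i hi
    simp only [ha']
    rw [dif_pos hi, dif_pos (Nat.lt_of_succ_lt hi)]
    exact ha (by simp [Fin.le_def])
  · intro k hk
    rcases lt_or_eq_of_le hk with hk' | rfl
    · have := h.1 k hk'
      simp only [hDdef]; linarith
    · rw [hDn]
  · simp [hDdef, topSum_zero]

lemma sorted_dot_eq (n : ℕ) (c x : Fin n → ℝ) :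
    ∃ τ : Equiv.Perm (Fin n), ∑ i, sortedDesc n c i * sortedDesc n x i
      = ∑ i, c i * (x ∘ τ) i := by
  set πc : Equiv.Perm (Fin n) := Tuple.sort c * (Fin.revPerm : Equiv.Perm (Fin n)) with hπc
  set πx : Equiv.Perm (Fin n) := Tuple.sort x * (Fin.revPerm : Equiv.Perm (Fin n)) with hπx
  refine ⟨πx * πc⁻¹, ?_⟩
  rw [← Equiv.sum_comp πc (fun j => c j * (x ∘ ⇑(πx * πc⁻¹)) j)]
  refine Finset.sum_congr rfl fun i _ => ?_
  simp [sortedDesc_apply, ← hπc, ← hπx, Function.comp, Equiv.Perm.mul_apply]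

lemma clm_eq_sum (n : ℕ) (f : (Fin n → ℝ) →L[ℝ] ℝ) (z : Fin n → ℝ) :
    f z = ∑ i, f (Pi.single i 1) * z i := by
  conv_lhs => rw [← Finset.univ_sum_single z]
  rw [map_sum]
  refine Finset.sum_congr rfl fun i _ => ?_
  have hz : (Pi.single i (z i) : Fin n → ℝ) = z i • (Pi.single i 1 : Fin n → ℝ) := by
    ext j
    by_cases hj : j = i
    · subst hj; simp
    · simp [Pi.single_eq_of_ne hj]
  rw [hz, map_smul, smul_eq_mul, mul_comm]

theorem majorizes_iff_convexComb_of_permutations (n : ℕ) (x y : Fin n → ℝ) :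
    Majorizes n x y ↔
      y ∈ convexHull ℝ {z : Fin n → ℝ | ∃ σ : Equiv.Perm (Fin n), z = x ∘ σ} := by
  constructor
  · intro h
    by_contra hy
    have hK : ({z : Fin n → ℝ | ∃ σ : Equiv.Perm (Fin n), z = x ∘ σ}).Finite := by
      have hr : {z : Fin n → ℝ | ∃ σ : Equiv.Perm (Fin n), z = x ∘ σ}
          = Set.range (fun σ : Equiv.Perm (Fin n) => x ∘ σ) := by
        ext z; simp [eq_comm]
      rw [hr]; exact Set.finite_range _
    obtain ⟨f, u, hfu, huy⟩ := geometric_hahn_banach_closed_point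
      (convex_convexHull ℝ _) (hK.isClosed_convexHull ℝ) hy
    set c : Fin n → ℝ := fun i => f (Pi.single i 1) with hc
    obtain ⟨τ, hτ⟩ := sorted_dot_eq n c x
    have h1 : f y = ∑ i, c i * y i := clm_eq_sum n f y
    have h2 : f (x ∘ τ) = ∑ i, c i * (x ∘ ⇑τ) i := clm_eq_sum n f (x ∘ τ)
    have h3 := rearrange_le n c y
    have h4 := sorted_sum_le n x y h (sortedDesc n c) (sortedDesc_anti n c)
    have h5 : f (x ∘ τ) < u := hfu _ (subset_convexHull ℝ _ ⟨τ, rfl⟩)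
    linarith
  · exact hull_subset_majorizes n x y
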